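/- Let R be a commutative ring. The ring U_2(R) of 2×2 upper triangular matrices over R is a CN ring if and only if for any a, b in R there exists c in R such that both a - c and b - c are nilpotent in R. -/

import Mathlib

/-- An element of a ring has a *CN-decomposition* if it is a sum of a central
element and a nilpotent element. -/
def HasCNDecomp {R : Type*} [Ring R] (a : R) : Prop :=
  ∃ c n : R, c ∈ Set.center R ∧ IsNilpotent n ∧ a = c + n

/-- A ring is a *CN ring* if every element has a CN-decomposition. -/
def IsCNRing (R : Type*) [Ring R] : Prop := ∀ a : R, HasCNDecomp a

/-- `U₂(R)`: the subring of `M₂(R)` consisting of the upper triangular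
`2 × 2` matrices. -/
def U2 (R : Type*) [Ring R] : Subring (Matrix (Fin 2) (Fin 2) R) where
  carrier := {A | A 1 0 = 0}
  zero_mem' := by simp [Set.mem_setOf_eq]
  one_mem' := by simp [Set.mem_setOf_eq, Matrix.one_apply]
  add_mem' := by
    intro A B hA hB
    simp only [Set.mem_setOf_eq] at *
    simp [Matrix.add_apply, hA, hB]
  neg_mem' := by
    intro A hA
    simp only [Set.mem_setOf_eq] at *
    simp [Matrix.neg_apply, hA]
  mul_mem' := by
    intro A B hA hB
    simp only [Set.mem_setOf_eq] at *
    simp [Matrix.mul_apply, Fin.sum_univ_two, hA, hB]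

namespace U2aux

variable {R : Type*} [CommRing R]

lemma mem_U2 {A : Matrix (Fin 2) (Fin 2) R} (h : A ∈ U2 R) : A 1 0 = 0 := h

/-- top-left entry as a ring hom -/
def d0 : U2 R →+* R where
  toFun A := (A : Matrix (Fin 2) (Fin 2) R) 0 0
  map_one' := by simp [Matrix.one_apply]
  map_mul' A B := by
    have hB : (B : Matrix (Fin 2) (Fin 2) R) 1 0 = 0 := B.2
    simp [Matrix.mul_apply, Fin.sum_univ_two, hB]
  map_zero' := rfl
  map_add' A B := rfl

/-- bottom-right entry as a ring hom -/
def d1 : U2 R →+* R where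
  toFun A := (A : Matrix (Fin 2) (Fin 2) R) 1 1
  map_one' := by simp [Matrix.one_apply]
  map_mul' A B := by
    have hA : (A : Matrix (Fin 2) (Fin 2) R) 1 0 = 0 := A.2
    simp [Matrix.mul_apply, Fin.sum_univ_two, hA]
  map_zero' := rfl
  map_add' A B := rfl

lemma isNilpotent_of_diag {A : U2 R} (h0 : IsNilpotent (d0 A)) (h1 : IsNilpotent (d1 A)) :
    IsNilpotent A := by
  obtain ⟨m, hm⟩ := h0
  obtain ⟨n, hn⟩ := h1
  refine ⟨(m + n) * 2, ?_⟩
  rw [pow_mul]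
  set B := A ^ (m + n) with hBdef
  have hB00 : (B : Matrix (Fin 2) (Fin 2) R) 0 0 = 0 := by
    have : d0 B = 0 := by
      rw [hBdef, map_pow, pow_add, hm, zero_mul]
    exact this
  have hB11 : (B : Matrix (Fin 2) (Fin 2) R) 1 1 = 0 := by
    have : d1 B = 0 := by
      rw [hBdef, map_pow, pow_add, mul_comm, hn, zero_mul]
    exact this
  have hB10 : (B : Matrix (Fin 2) (Fin 2) R) 1 0 = 0 := B.2
  apply Subtype.ext
  push_cast
  show (B : Matrix (Fin 2) (Fin 2) R) ^ 2 = 0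
  rw [sq]
  ext i j
  fin_cases i <;> fin_cases j <;>
    simp [Matrix.mul_apply, Fin.sum_univ_two, hB00, hB11, hB10]

end U2aux

open U2aux in
/-- For a commutative ring `R`, the upper triangular matrix ring `U₂(R)` is a
CN ring iff for all `a b : R` there is `c : R` with `a - c` and `b - c`
nilpotent. -/
theorem U2_isCNRing_iff {R : Type*} [CommRing R] :
    IsCNRing (U2 R) ↔
      ∀ a b : R, ∃ c : R, IsNilpotent (a - c) ∧ IsNilpotent (b - c) := by
  constructor
  · intro h a b
    set A : U2 R := ⟨!![a, 0; 0, b], by show !![a, 0; 0, b] 1 0 = 0; simp⟩ with hA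
    obtain ⟨C, N, hC, hN, hsum⟩ := h A
    set E : U2 R := ⟨!![0, 1; 0, 0], by show !![(0:R), 1; 0, 0] 1 0 = 0; simp⟩ with hE
    have hcomm : E * C = C * E := (Semigroup.mem_center_iff.mp hC) E
    have hCeq : (C : Matrix (Fin 2) (Fin 2) R) 1 1 = (C : Matrix (Fin 2) (Fin 2) R) 0 0 := by
      have := congrArg (fun X : U2 R => (X : Matrix (Fin 2) (Fin 2) R) 0 1) hcomm
      simpa [hE, Matrix.mul_apply, Fin.sum_univ_two] using this
    refine ⟨(C : Matrix (Fin 2) (Fin 2) R) 0 0, ?_, ?_⟩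
    · have h00 : a = (C : Matrix (Fin 2) (Fin 2) R) 0 0 + (N : Matrix (Fin 2) (Fin 2) R) 0 0 := by
        have := congrArg (fun X : U2 R => (X : Matrix (Fin 2) (Fin 2) R) 0 0) hsum
        simpa [hA] using this
      have : a - (C : Matrix (Fin 2) (Fin 2) R) 0 0 = d0 N := by
        simp [d0, h00]
        rfl
      rw [this]
      exact hN.map d0
    · have h11 : b = (C : Matrix (Fin 2) (Fin 2) R) 1 1 + (N : Matrix (Fin 2) (Fin 2) R) 1 1 := by
        have := congrArg (fun X : U2 R => (X : Matrix (Fin 2) (Fin 2) R) 1 1) hsum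
        simpa [hA] using this
      have : b - (C : Matrix (Fin 2) (Fin 2) R) 0 0 = d1 N := by
        simp [d1, h11, hCeq]
        rfl
      rw [this]
      exact hN.map d1
  · intro h A
    obtain ⟨c, hc0, hc1⟩ := h ((A : Matrix (Fin 2) (Fin 2) R) 0 0) ((A : Matrix (Fin 2) (Fin 2) R) 1 1)
    set C : U2 R := ⟨c • (1 : Matrix (Fin 2) (Fin 2) R), by
      show (c • (1 : Matrix (Fin 2) (Fin 2) R)) 1 0 = 0
      simp [Matrix.one_apply]⟩ with hCdef
    have hCcen : C ∈ Set.center (U2 R) := by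
      rw [Semigroup.mem_center_iff]
      intro B
      apply Subtype.ext
      push_cast
      show (B : Matrix (Fin 2) (Fin 2) R) * (c • 1) = (c • 1) * (B : Matrix (Fin 2) (Fin 2) R)
      rw [mul_smul_comm, smul_mul_assoc, mul_one, one_mul]
    refine ⟨C, A - C, hCcen, ?_, by abel⟩
    apply isNilpotent_of_diag
    · have : d0 (A - C) = (A : Matrix (Fin 2) (Fin 2) R) 0 0 - c := by
        simp [d0, hCdef, Matrix.one_apply]
        show (A : Matrix (Fin 2) (Fin 2) R) 0 0 - (c • (1 : Matrix (Fin 2) (Fin 2) R)) 0 0 = _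
        simp [Matrix.one_apply]
      rw [this]; exact hc0
    · have : d1 (A - C) = (A : Matrix (Fin 2) (Fin 2) R) 1 1 - c := by
        simp [d1, hCdef, Matrix.one_apply]
        show (A : Matrix (Fin 2) (Fin 2) R) 1 1 - (c • (1 : Matrix (Fin 2) (Fin 2) R)) 1 1 = _
        simp [Matrix.one_apply]
      rw [this]; exact hc1
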